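/- arXiv:0912.4778 — 2 statements merged into one kernel-verified Lean document; each statement's English description precedes it below -/
import Mathlib

section
/- For every integer k ≥ 4, the k-rung Möbius ladder M_k is almost 4-connected. -/
variable {V : Type} [Fintype V]

/-- A separation of `G`: a pair of vertex sets covering `V(G)` with no edge
between `A − B` and `B − A`. -/
def IsSeparation (G : SimpleGraph V) (A B : Set V) : Prop :=
  A ∪ B = Set.univ ∧ ∀ a ∈ A \ B, ∀ b ∈ B \ A, ¬ G.Adj a b

/-- `G` is 3-connected: it has at least 4 vertices and stays connected after deleting
any set of at most 2 vertices. -/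
def ThreeConnected (G : SimpleGraph V) : Prop :=
  4 ≤ Fintype.card V ∧ ∀ S : Set V, S.ncard ≤ 2 → (G.induce (Sᶜ : Set V)).Connected

/-- `G` is 4-connected: it has at least 5 vertices and stays connected after deleting
any set of at most 3 vertices. -/
def FourConnected (G : SimpleGraph V) : Prop :=
  5 ≤ Fintype.card V ∧ ∀ S : Set V, S.ncard ≤ 3 → (G.induce (Sᶜ : Set V)).Connected

/-- `G` is almost 4-connected: it is 3-connected and for every separation `(A,B)` of
order three, one of `A − B`, `B − A` contains at most one vertex. -/
def AlmostFourConnected (G : SimpleGraph V) : Prop :=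
  ThreeConnected G ∧ ∀ A B : Set V, IsSeparation G A B → (A ∩ B).ncard = 3 →
    (A \ B).ncard ≤ 1 ∨ (B \ A).ncard ≤ 1

/-- The `k`-rung Möbius ladder `M_k`: two paths `v_1, …, v_k` (`Sum.inl`) and
`u_1, …, u_k` (`Sum.inr`), rungs `v_i u_i`, plus the edges `v_1 u_k` and `u_1 v_k`. -/
def mobiusLadder (k : ℕ) : SimpleGraph (Fin k ⊕ Fin k) :=
  SimpleGraph.fromRel (fun a b =>
    match a, b with
    | Sum.inl i, Sum.inl j => (j : ℕ) = (i : ℕ) + 1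
    | Sum.inr i, Sum.inr j => (j : ℕ) = (i : ℕ) + 1
    | Sum.inl i, Sum.inr j =>
        (i : ℕ) = (j : ℕ) ∨ ((i : ℕ) = 0 ∧ (j : ℕ) = k - 1) ∨
        ((j : ℕ) = 0 ∧ (i : ℕ) = k - 1)
    | _, _ => False)

section ZModHelpers

variable {n : ℕ} [NeZero n]

private lemma zmod_decomp (b z : ZMod n) : z = b + ((z - b).val : ZMod n) := by
  rw [ZMod.natCast_rightInverse (z - b)]; ring

private lemma exists_boundary (X : Set (ZMod n)) (hX : X.Nonempty) (hXc : Xᶜ.Nonempty) :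
    ∃ x ∈ X, x + 1 ∉ X := by
  by_contra h
  push_neg at h
  obtain ⟨x₀, hx₀⟩ := hX
  obtain ⟨y, hy⟩ := hXc
  have key : ∀ t : ℕ, x₀ + (t : ZMod n) ∈ X := by
    intro t
    induction t with
    | zero => simpa using hx₀
    | succ t ih =>
        have := h _ ih
        push_cast
        rw [← add_assoc]
        exact this
  exact hy (zmod_decomp x₀ y ▸ key _)

private lemma ncard_TH (X : Set (ZMod n)) :
    {x | x ∈ X ∧ x + 1 ∉ X}.ncard = {x | x ∈ X ∧ x - 1 ∉ X}.ncard := by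
  have h1 : {x | x ∈ X ∧ x + 1 ∉ X} = X \ {x | x ∈ X ∧ x + 1 ∈ X} := by
    ext x; simp
  have h2 : {x | x ∈ X ∧ x - 1 ∉ X} = X \ {x | x ∈ X ∧ x - 1 ∈ X} := by
    ext x; simp
  have h3 : (fun x => x + 1) '' {x | x ∈ X ∧ x + 1 ∈ X} = {x | x ∈ X ∧ x - 1 ∈ X} := by
    ext y
    constructor
    · rintro ⟨x, ⟨hx1, hx2⟩, rfl⟩; exact ⟨hx2, by simpa using hx1⟩
    · rintro ⟨hy1, hy2⟩; exact ⟨y - 1, ⟨hy2, by simpa using hy1⟩, by simp⟩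
  have hinj : Function.Injective (fun x : ZMod n => x + 1) := add_left_injective 1
  have h4 : {x | x ∈ X ∧ x - 1 ∈ X}.ncard = {x | x ∈ X ∧ x + 1 ∈ X}.ncard := by
    rw [← h3, Set.ncard_image_of_injective _ hinj]
  rw [h1, h2, Set.ncard_diff (by intro x hx; exact hx.1),
      Set.ncard_diff (by intro x hx; exact hx.1), h4]

private lemma interval_struct (X : Set (ZMod n)) (a b : ZMod n)
    (hT : {x | x ∈ X ∧ x + 1 ∉ X} = {a})
    (hH : {x | x ∈ X ∧ x - 1 ∉ X} = {b}) :
    ∀ z, z ∈ X ↔ (z - b).val ≤ (a - b).val := by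
  have ha : a ∈ X ∧ a + 1 ∉ X := by
    have : a ∈ ({a} : Set (ZMod n)) := rfl
    rw [← hT] at this; exact this
  have hb : b ∈ X ∧ b - 1 ∉ X := by
    have : b ∈ ({b} : Set (ZMod n)) := rfl
    rw [← hH] at this; exact this
  have hstep : ∀ x ∈ X, x ≠ a → x + 1 ∈ X := by
    intro x hx hxa
    by_contra h
    exact hxa (by have : x ∈ {x | x ∈ X ∧ x + 1 ∉ X} := ⟨hx, h⟩; rwa [hT] at this)
  have hstepd : ∀ x ∈ X, x ≠ b → x - 1 ∈ X := by
    intro x hx hxb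
    by_contra h
    exact hxb (by have : x ∈ {x | x ∈ X ∧ x - 1 ∉ X} := ⟨hx, h⟩; rwa [hH] at this)
  set D := (a - b).val with hD
  have hDn : D < n := ZMod.val_lt _
  have hcast : ((D : ZMod n)) = a - b := ZMod.natCast_rightInverse (a - b)
  have C1 : ∀ t, t ≤ D → b + (t : ZMod n) ∈ X := by
    intro t
    induction t with
    | zero => intro _; simpa using hb.1
    | succ t ih =>
        intro ht
        have h1 : b + (t : ZMod n) ∈ X := ih (by omega)
        have h2 : b + (t : ZMod n) ≠ a := by
          intro h
          have : ((t : ZMod n)).val = D := by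
            rw [hD, ← h]; ring_nf
          rw [ZMod.val_natCast, Nat.mod_eq_of_lt (by omega)] at this
          omega
        have := hstep _ h1 h2
        push_cast
        rwa [← add_assoc]
  have C2 : ∀ z ∈ X, (z - b).val ≤ D := by
    intro z hz
    by_contra h
    push_neg at h
    set t := (z - b).val with htdef
    have htn : t < n := ZMod.val_lt _
    have hzt : z = b + (t : ZMod n) := by
      rw [htdef, ZMod.natCast_rightInverse (z - b)]; ring
    have desc : ∀ j, j ≤ t → z - (j : ZMod n) ∈ X := by
      intro j
      induction j with
      | zero => intro _; simpa using hz
      | succ j ih =>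
          intro hj
          have h1 : z - (j : ZMod n) ∈ X := ih (by omega)
          have h2 : z - (j : ZMod n) ≠ b := by
            intro hzb
            have : z - b = (j : ZMod n) := by rw [← hzb]; ring
            have : t = j % n := by rw [htdef, this, ZMod.val_natCast]
            rw [Nat.mod_eq_of_lt (by omega)] at this
            omega
          have := hstepd _ h1 h2
          push_cast
          rwa [← sub_sub]
    have key := desc (t - D - 1) (by omega)
    have hc : ((t - D - 1 : ℕ) : ZMod n) = (t : ZMod n) - (D : ZMod n) - 1 := by
      rw [Nat.sub_sub, Nat.cast_sub (by omega : D + 1 ≤ t)]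
      push_cast; ring
    have hEq : z - ((t - D - 1 : ℕ) : ZMod n) = a + 1 := by
      rw [hzt, hc, hcast]; ring
    rw [hEq] at key
    exact ha.2 key
  intro z
  refine ⟨C2 z, fun h => ?_⟩
  have h2 := C1 _ h
  have h3 : b + (((z - b).val : ℕ) : ZMod n) = z := by
    rw [ZMod.natCast_rightInverse (z - b)]; ring
  rwa [h3] at h2

private lemma interval_ncard (X : Set (ZMod n)) (b : ZMod n) (D : ℕ) (hDn : D < n)
    (hmem : ∀ z, z ∈ X ↔ (z - b).val ≤ D) : X.ncard = D + 1 := by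
  have hX : X = (fun t : ℕ => b + (t : ZMod n)) '' Set.Iic D := by
    ext z
    constructor
    · intro hz
      refine ⟨(z - b).val, (hmem z).1 hz, ?_⟩
      simp only
      rw [ZMod.natCast_rightInverse (z - b)]; ring
    · rintro ⟨t, ht, rfl⟩
      rw [hmem]
      simp only [add_sub_cancel_left, ZMod.val_natCast]
      calc t % n ≤ t := Nat.mod_le _ _
        _ ≤ D := ht
  have hinj : Set.InjOn (fun t : ℕ => b + (t : ZMod n)) (Set.Iic D) := by
    intro s hs t ht h
    simp only [add_right_inj] at h
    have := congrArg ZMod.val h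
    rw [ZMod.val_natCast, ZMod.val_natCast, Nat.mod_eq_of_lt (by simp at hs; omega),
      Nat.mod_eq_of_lt (by simp at ht; omega)] at this
    exact this
  rw [hX, Set.ncard_image_of_injOn hinj, ← Finset.coe_Iic, Set.ncard_coe_finset,
    Nat.card_Iic]

end ZModHelpers

private lemma core_aux (k : ℕ) (hk : 4 ≤ k) (X Y : Set (ZMod (2*k)))
    (hdisj : ∀ z, z ∈ X → z ∈ Y → False)
    (hX : X.Nonempty) (hY : Y.Nonempty)
    (hedge : ∀ x ∈ X, ∀ y ∈ Y, y ≠ x + 1 ∧ x ≠ y + 1 ∧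
      y ≠ x + (k : ZMod (2*k)) ∧ x ≠ y + (k : ZMod (2*k)))
    (hS3 : ((X ∪ Y)ᶜ).ncard ≤ 3)
    (hbig : ((X ∪ Y)ᶜ).ncard ≤ 2 ∨ (2 ≤ X.ncard ∧ 2 ≤ Y.ncard))
    (hT1 : {x | x ∈ X ∧ x + 1 ∉ X}.ncard = 1) : False := by
  haveI : NeZero (2*k) := ⟨by omega⟩
  set S := (X ∪ Y)ᶜ with hSdef
  have hmemS : ∀ z, z ∉ X → z ∉ Y → z ∈ S := by
    intro z h1 h2
    simp only [hSdef, Set.mem_compl_iff, Set.mem_union]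
    tauto
  have hH1 : {x | x ∈ X ∧ x - 1 ∉ X}.ncard = 1 := by rw [← ncard_TH]; exact hT1
  obtain ⟨a, hTa⟩ := Set.ncard_eq_one.mp hT1
  obtain ⟨b, hHb⟩ := Set.ncard_eq_one.mp hH1
  have hmem := interval_struct X a b hTa hHb
  set D := (a - b).val with hDdef
  have hDn : D < 2*k := ZMod.val_lt _
  have hcard : X.ncard = D + 1 := interval_ncard X b D hDn hmem
  have ha : a ∈ X ∧ a + 1 ∉ X := by
    have : a ∈ ({a} : Set (ZMod (2*k))) := rfl
    rw [← hTa] at this; exact this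
  have hb : b ∈ X ∧ b - 1 ∉ X := by
    have : b ∈ ({b} : Set (ZMod (2*k))) := rfl
    rw [← hHb] at this; exact this
  have hcastD : ((D : ZMod (2*k))) = a - b := ZMod.natCast_rightInverse (a - b)
  have hvalk : ((k : ZMod (2*k))).val = k := by
    rw [ZMod.val_natCast, Nat.mod_eq_of_lt (by omega)]
  have ha1Y : a + 1 ∉ Y := fun h => (hedge a ha.1 (a+1) h).1 rfl
  have hb1Y : b - 1 ∉ Y := fun h => (hedge b hb.1 (b-1) h).2.1 (by ring)
  have ha1S : a + 1 ∈ S := hmemS _ ha.2 ha1Y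
  have hb1S : b - 1 ∈ S := hmemS _ hb.2 hb1Y
  have hval_a1 : (a + 1 - b).val = (D + 1) % (2*k) := by
    have : a + 1 - b = ((D + 1 : ℕ) : ZMod (2*k)) := by push_cast [hcastD]; ring
    rw [this, ZMod.val_natCast]
  have hval_b1 : (b - 1 - b).val = 2*k - 1 := by
    have h2k : ((2*k : ℕ) : ZMod (2*k)) = 0 := ZMod.natCast_self _
    have : b - 1 - b = ((2*k - 1 : ℕ) : ZMod (2*k)) := by
      rw [Nat.cast_sub (by omega : 1 ≤ 2*k), h2k]
      push_cast
      ring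
    rw [this, ZMod.val_natCast, Nat.mod_eq_of_lt (by omega)]
  have hval_shift : ∀ z : ZMod (2*k),
      (z + (k : ZMod (2*k)) - b).val = ((z - b).val + k) % (2*k) := by
    intro z
    have : z + (k : ZMod (2*k)) - b = (z - b) + (k : ZMod (2*k)) := by ring
    rw [this, ZMod.val_add, hvalk]
  have hYS : Y.ncard + S.ncard = 2*k - (D+1) := by
    have hun : Y ∪ S = Xᶜ := by
      ext z
      simp only [hSdef, Set.mem_union, Set.mem_compl_iff]
      constructor
      · rintro (h | h)
        · exact fun hz => hdisj z hz h
        · exact fun hz => h (Or.inl hz)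
      · intro h
        by_cases hzY : z ∈ Y
        · exact Or.inl hzY
        · exact Or.inr (by simp [Set.mem_union]; tauto)
    have hdisjYS : Disjoint Y S := by
      rw [Set.disjoint_left]
      intro z hz hzS
      simp only [hSdef, Set.mem_compl_iff, Set.mem_union] at hzS
      exact hzS (Or.inr hz)
    have h1 : (Y ∪ S).ncard = Y.ncard + S.ncard := Set.ncard_union_eq hdisjYS
    have h2 : X.ncard + Xᶜ.ncard = Nat.card (ZMod (2*k)) := Set.ncard_add_ncard_compl X
    rw [Nat.card_zmod] at h2
    rw [hun] at h1
    omega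
  have hYpos : 1 ≤ Y.ncard := (Set.ncard_pos (Set.toFinite _)).mpr hY
  have hSpos : 1 ≤ S.ncard := (Set.ncard_pos (Set.toFinite _)).mpr ⟨a+1, ha1S⟩
  have hDle : D ≤ 2*k - 2 := by omega
  rcases Nat.lt_or_ge D (k-1) with hcase | hcase
  · -- Case 1 : D ≤ k - 2
    have hsub : (fun x => x + (k : ZMod (2*k))) '' X ∪ {a+1, b-1} ⊆ S := by
      rintro z (⟨x, hx, rfl⟩ | hz)
      · have hxk_Y : x + (k : ZMod (2*k)) ∉ Y := fun h => (hedge x hx _ h).2.2.1 rfl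
        have hxk_X : x + (k : ZMod (2*k)) ∉ X := by
          rw [hmem]
          have ht : (x - b).val ≤ D := (hmem x).1 hx
          rw [hval_shift, Nat.mod_eq_of_lt (by omega)]
          omega
        exact hmemS _ hxk_X hxk_Y
      · rcases hz with rfl | rfl
        · exact ha1S
        · exact hb1S
    have hdisj2 : Disjoint ((fun x => x + (k : ZMod (2*k))) '' X) ({a+1, b-1} : Set (ZMod (2*k))) := by
      rw [Set.disjoint_right]
      rintro z (rfl | rfl) ⟨x, hx, hxe⟩
      · have ht : (x - b).val ≤ D := (hmem x).1 hx
        have := congrArg (fun w => (w - b).val) hxe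
        simp only at this
        rw [hval_shift, hval_a1, Nat.mod_eq_of_lt (by omega), Nat.mod_eq_of_lt (by omega)] at this
        omega
      · have ht : (x - b).val ≤ D := (hmem x).1 hx
        have := congrArg (fun w => (w - b).val) hxe
        simp only at this
        rw [hval_shift, hval_b1, Nat.mod_eq_of_lt (by omega)] at this
        omega
    have hne : a + 1 ≠ b - 1 := by
      intro h
      have := congrArg (fun w => (w - b).val) h
      rw [hval_a1, hval_b1, Nat.mod_eq_of_lt (by omega)] at this
      omega
    have hcard2 : ((fun x => x + (k : ZMod (2*k))) '' X ∪ {a+1, b-1}).ncard = (D + 1) + 2 := by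
      rw [Set.ncard_union_eq hdisj2, Set.ncard_image_of_injective _ (add_left_injective _),
        hcard, Set.ncard_pair hne]
    have hge : (D + 1) + 2 ≤ S.ncard := by
      rw [← hcard2]
      exact Set.ncard_le_ncard hsub (Set.toFinite _)
    rcases hbig with h | h
    · omega
    · rw [hcard] at h; omega
  · -- Case 2 : D ≥ k - 1
    by_cases hDtop : D = 2*k - 2
    · omega
    have hDle2 : D ≤ 2*k - 3 := by omega
    have hsub : (fun y => y + (k : ZMod (2*k))) '' Y ∪ {a+1, b-1} ⊆ S := by
      rintro z (⟨y, hy, rfl⟩ | hz)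
      · have hyk_X : y + (k : ZMod (2*k)) ∉ X :=
          fun h => (hedge _ h y hy).2.2.2 rfl
        have hyk_Y : y + (k : ZMod (2*k)) ∉ Y := by
          intro h
          have hs1 : ¬ (y - b).val ≤ D := fun hc => hdisj y ((hmem y).2 hc) hy
          have hs2 : ¬ (y + (k : ZMod (2*k)) - b).val ≤ D :=
            fun hc => hdisj _ ((hmem _).2 hc) h
          have hs3 : (y - b).val < 2*k := ZMod.val_lt _
          have hmod : ((y - b).val + k) % (2*k) = (y - b).val + k - 2*k := by
            rw [Nat.mod_eq_sub_mod (by omega), Nat.mod_eq_of_lt (by omega)]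
          rw [hval_shift, hmod] at hs2
          omega
        exact hmemS _ hyk_X hyk_Y
      · rcases hz with rfl | rfl
        · exact ha1S
        · exact hb1S
    have hdisj2 : Disjoint ((fun y => y + (k : ZMod (2*k))) '' Y) ({a+1, b-1} : Set (ZMod (2*k))) := by
      rw [Set.disjoint_right]
      rintro z (rfl | rfl) ⟨y, hy, hye⟩
      · have hs1 : ¬ (y - b).val ≤ D := fun hc => hdisj y ((hmem y).2 hc) hy
        have hs3 : (y - b).val < 2*k := ZMod.val_lt _
        have hmod : ((y - b).val + k) % (2*k) = (y - b).val + k - 2*k := by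
          rw [Nat.mod_eq_sub_mod (by omega), Nat.mod_eq_of_lt (by omega)]
        have := congrArg (fun w => (w - b).val) hye
        simp only at this
        rw [hval_shift, hmod, hval_a1, Nat.mod_eq_of_lt (by omega)] at this
        omega
      · have hs1 : ¬ (y - b).val ≤ D := fun hc => hdisj y ((hmem y).2 hc) hy
        have hs3 : (y - b).val < 2*k := ZMod.val_lt _
        have hmod : ((y - b).val + k) % (2*k) = (y - b).val + k - 2*k := by
          rw [Nat.mod_eq_sub_mod (by omega), Nat.mod_eq_of_lt (by omega)]
        have := congrArg (fun w => (w - b).val) hye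
        simp only at this
        rw [hval_shift, hmod, hval_b1] at this
        omega
    have hne : a + 1 ≠ b - 1 := by
      intro h
      have := congrArg (fun w => (w - b).val) h
      rw [hval_a1, hval_b1, Nat.mod_eq_of_lt (by omega)] at this
      omega
    have hcard2 : ((fun y => y + (k : ZMod (2*k))) '' Y ∪ {a+1, b-1}).ncard = Y.ncard + 2 := by
      rw [Set.ncard_union_eq hdisj2, Set.ncard_image_of_injective _ (add_left_injective _),
        Set.ncard_pair hne]
    have hge : Y.ncard + 2 ≤ S.ncard := by
      rw [← hcard2]
      exact Set.ncard_le_ncard hsub (Set.toFinite _)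
    rcases hbig with h | h
    · omega
    · omega

private lemma core (k : ℕ) (hk : 4 ≤ k) (X Y : Set (ZMod (2*k)))
    (hdisj : ∀ z, z ∈ X → z ∈ Y → False)
    (hX : X.Nonempty) (hY : Y.Nonempty)
    (hedge : ∀ x ∈ X, ∀ y ∈ Y, y ≠ x + 1 ∧ x ≠ y + 1 ∧
      y ≠ x + (k : ZMod (2*k)) ∧ x ≠ y + (k : ZMod (2*k)))
    (hS3 : ((X ∪ Y)ᶜ).ncard ≤ 3)
    (hbig : ((X ∪ Y)ᶜ).ncard ≤ 2 ∨ (2 ≤ X.ncard ∧ 2 ≤ Y.ncard)) : False := by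
  haveI : NeZero (2*k) := ⟨by omega⟩
  obtain ⟨y0, hy0⟩ := hY
  obtain ⟨x0, hx0⟩ := hX
  have hTXne : {x | x ∈ X ∧ x + 1 ∉ X}.Nonempty := by
    obtain ⟨x, hx1, hx2⟩ := exists_boundary X ⟨x0, hx0⟩ ⟨y0, fun h => hdisj y0 h hy0⟩
    exact ⟨x, hx1, hx2⟩
  have hTYne : {y | y ∈ Y ∧ y + 1 ∉ Y}.Nonempty := by
    obtain ⟨y, hy1, hy2⟩ := exists_boundary Y ⟨y0, hy0⟩ ⟨x0, fun h => hdisj x0 hx0 h⟩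
    exact ⟨y, hy1, hy2⟩
  have hsub : (fun x => x + 1) '' {x | x ∈ X ∧ x + 1 ∉ X} ∪
      (fun y => y + 1) '' {y | y ∈ Y ∧ y + 1 ∉ Y} ⊆ (X ∪ Y)ᶜ := by
    rintro z (⟨x, ⟨hx1, hx2⟩, rfl⟩ | ⟨y, ⟨hy1, hy2⟩, rfl⟩) <;>
      simp only [Set.mem_compl_iff, Set.mem_union]
    · rintro (h | h)
      · exact hx2 h
      · exact (hedge x hx1 _ h).1 rfl
    · rintro (h | h)
      · exact (hedge _ h y hy1).2.1 rfl
      · exact hy2 h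
  have hdisj2 : Disjoint ((fun x => x + 1) '' {x | x ∈ X ∧ x + 1 ∉ X})
      ((fun y => y + 1) '' {y | y ∈ Y ∧ y + 1 ∉ Y}) := by
    rw [Set.disjoint_left]
    rintro z ⟨x, ⟨hx1, _⟩, rfl⟩ ⟨y, ⟨hy1, _⟩, hye⟩
    simp only [add_left_inj] at hye
    exact hdisj x (hye ▸ hx1) (hye ▸ hy1)
  have hcount : {x | x ∈ X ∧ x + 1 ∉ X}.ncard + {y | y ∈ Y ∧ y + 1 ∉ Y}.ncard ≤ 3 := by
    have h1 := Set.ncard_le_ncard hsub (Set.toFinite _)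
    rw [Set.ncard_union_eq hdisj2, Set.ncard_image_of_injective _ (add_left_injective _),
      Set.ncard_image_of_injective _ (add_left_injective _)] at h1
    omega
  have hTX1 : 1 ≤ {x | x ∈ X ∧ x + 1 ∉ X}.ncard := (Set.ncard_pos (Set.toFinite _)).mpr hTXne
  have hTY1 : 1 ≤ {y | y ∈ Y ∧ y + 1 ∉ Y}.ncard := (Set.ncard_pos (Set.toFinite _)).mpr hTYne
  rcases (show {x | x ∈ X ∧ x + 1 ∉ X}.ncard = 1 ∨ {y | y ∈ Y ∧ y + 1 ∉ Y}.ncard = 1 by omega)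
    with h1 | h1
  · exact core_aux k hk X Y hdisj ⟨x0, hx0⟩ ⟨y0, hy0⟩ hedge hS3 hbig h1
  · refine core_aux k hk Y X (fun z hz1 hz2 => hdisj z hz2 hz1) ⟨y0, hy0⟩ ⟨x0, hx0⟩
      (fun y hy x hx => ⟨(hedge x hx y hy).2.1, (hedge x hx y hy).1,
        (hedge x hx y hy).2.2.2, (hedge x hx y hy).2.2.1⟩) ?_ ?_ h1
    · rwa [Set.union_comm]
    · rcases hbig with h | h
      · left; rwa [Set.union_comm]
      · right; exact ⟨h.2, h.1⟩

@[reducible]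
private def posNat (k : ℕ) : Fin k ⊕ Fin k → ℕ
  | Sum.inl i => (i : ℕ)
  | Sum.inr i => k + (i : ℕ)

private def posMap (k : ℕ) (a : Fin k ⊕ Fin k) : ZMod (2*k) := (posNat k a : ZMod (2*k))

private lemma posNat_lt (k : ℕ) (a : Fin k ⊕ Fin k) : posNat k a < 2*k := by
  rcases a with i | i <;> simp [posNat] <;> omega

private lemma posMap_inj (k : ℕ) (hk : 1 ≤ k) : Function.Injective (posMap k) := by
  haveI : NeZero (2*k) := ⟨by omega⟩
  intro a b h
  have h2 := congrArg ZMod.val h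
  simp only [posMap, ZMod.val_natCast] at h2
  rw [Nat.mod_eq_of_lt (posNat_lt k a), Nat.mod_eq_of_lt (posNat_lt k b)] at h2
  rcases a with i | i <;> rcases b with j | j <;>
    simp only [posNat] at h2 <;>
    · first
      | (congr 1; exact Fin.ext (by omega))
      | (exact absurd h2 (by omega))

private lemma mod_two_cases (x m : ℕ) (h : x < 2*m) :
    x % m = if x < m then x else x - m := by
  split_ifs with h1
  · exact Nat.mod_eq_of_lt h1
  · rw [Nat.mod_eq_sub_mod (by omega), Nat.mod_eq_of_lt (by omega)]

private lemma cast_eq_add_iff {n : ℕ} [NeZero n] (u v c : ℕ) (hv : v < n) :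
    ((v : ZMod n) = (u : ZMod n) + (c : ZMod n)) ↔ v = (u + c) % n := by
  rw [← Nat.cast_add, ZMod.natCast_eq_natCast_iff', Nat.mod_eq_of_lt hv]

private lemma posMap_adj (k : ℕ) (hk : 4 ≤ k) (a b : Fin k ⊕ Fin k) :
    (mobiusLadder k).Adj a b ↔ posMap k a ≠ posMap k b ∧
      (posMap k b = posMap k a + 1 ∨ posMap k a = posMap k b + 1 ∨
        posMap k b = posMap k a + (k : ZMod (2*k))) := by
  haveI : NeZero (2*k) := ⟨by omega⟩
  have hne : a ≠ b ↔ posMap k a ≠ posMap k b :=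
    ⟨fun h h2 => h (posMap_inj k (by omega) h2), fun h h2 => h (h2 ▸ rfl)⟩
  rw [mobiusLadder, SimpleGraph.fromRel_adj, hne]
  have hone : (1 : ZMod (2*k)) = ((1 : ℕ) : ZMod (2*k)) := by push_cast; ring
  have hcond : ∀ a b : Fin k ⊕ Fin k,
      (posMap k b = posMap k a + 1 ∨ posMap k a = posMap k b + 1 ∨
        posMap k b = posMap k a + (k : ZMod (2*k)))
      ↔ (posNat k b = (posNat k a + 1) % (2*k) ∨ posNat k a = (posNat k b + 1) % (2*k) ∨
          posNat k b = (posNat k a + k) % (2*k)) := by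
    intro a b
    rw [posMap, posMap, hone,
      cast_eq_add_iff _ _ _ (posNat_lt k b), cast_eq_add_iff _ _ _ (posNat_lt k a),
      cast_eq_add_iff _ _ _ (posNat_lt k b)]
  constructor
  · rintro ⟨h1, h2⟩
    refine ⟨h1, (hcond a b).mpr ?_⟩
    have hm1 := mod_two_cases (posNat k a + 1) (2*k) (by have := posNat_lt k a; omega)
    have hm2 := mod_two_cases (posNat k b + 1) (2*k) (by have := posNat_lt k b; omega)
    have hm3 := mod_two_cases (posNat k a + k) (2*k) (by have := posNat_lt k a; omega)
    rcases a with i | i <;> rcases b with j | j <;>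
      simp only [posNat] at hm1 hm2 hm3 ⊢ <;>
      rcases h2 with h2 | h2 <;>
      dsimp only at h2 <;>
      first
      | exact h2.elim
      | (have hi := i.isLt
         have hj := j.isLt
         rw [hm1, hm2, hm3]
         split_ifs <;> omega)
  · rintro ⟨h1, h2⟩
    refine ⟨h1, ?_⟩
    rw [hcond a b] at h2
    have hm1 := mod_two_cases (posNat k a + 1) (2*k) (by have := posNat_lt k a; omega)
    have hm2 := mod_two_cases (posNat k b + 1) (2*k) (by have := posNat_lt k b; omega)
    have hm3 := mod_two_cases (posNat k a + k) (2*k) (by have := posNat_lt k a; omega)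
    rcases a with i | i <;> rcases b with j | j <;>
      simp only [posNat] at hm1 hm2 hm3 h2 <;>
      · have hi := i.isLt
        have hj := j.isLt
        rw [hm1, hm2, hm3] at h2
        dsimp only
        split_ifs at h2 <;> omega

private lemma core_V (k : ℕ) (hk : 4 ≤ k) (X Y : Set (Fin k ⊕ Fin k))
    (hdisj : ∀ z, z ∈ X → z ∈ Y → False)
    (hX : X.Nonempty) (hY : Y.Nonempty)
    (hedge : ∀ x ∈ X, ∀ y ∈ Y, ¬ (mobiusLadder k).Adj x y)
    (hS3 : ((X ∪ Y)ᶜ).ncard ≤ 3)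
    (hbig : ((X ∪ Y)ᶜ).ncard ≤ 2 ∨ (2 ≤ X.ncard ∧ 2 ≤ Y.ncard)) : False := by
  haveI : NeZero (2*k) := ⟨by omega⟩
  have hinj := posMap_inj k (by omega)
  have hbij : Function.Bijective (posMap k) := by
    rw [Fintype.bijective_iff_injective_and_card]
    refine ⟨hinj, ?_⟩
    simp [ZMod.card]
    omega
  have himg : ∀ Z : Set (Fin k ⊕ Fin k), (posMap k '' Z).ncard = Z.ncard :=
    fun Z => Set.ncard_image_of_injective _ hinj
  apply core k hk (posMap k '' X) (posMap k '' Y)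
  · rintro z ⟨x, hx, rfl⟩ ⟨y, hy, hye⟩
    exact hdisj x hx (hinj hye ▸ hy)
  · exact hX.image _
  · exact hY.image _
  · rintro _ ⟨x, hx, rfl⟩ _ ⟨y, hy, rfl⟩
    have hnadj : ¬ (mobiusLadder k).Adj x y := hedge x hx y hy
    have hnadj' : ¬ (mobiusLadder k).Adj y x := fun h => hnadj h.symm
    rw [posMap_adj k hk] at hnadj hnadj'
    have hxy : x ≠ y := fun h => hdisj x hx (h ▸ hy)
    have hpne : posMap k x ≠ posMap k y := fun h => hxy (hinj h)
    push_neg at hnadj hnadj'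
    obtain ⟨e1, e2, e3⟩ := hnadj hpne
    obtain ⟨f1, f2, f3⟩ := hnadj' hpne.symm
    exact ⟨e1, e2, e3, f3⟩
  · rw [← Set.image_union, ← Set.image_compl_eq hbij, himg]
    exact hS3
  · rcases hbig with h | h
    · left; rw [← Set.image_union, ← Set.image_compl_eq hbij, himg]; exact h
    · right; rw [himg, himg]; exact h

private lemma conn_del (k : ℕ) (hk : 4 ≤ k) (S : Set (Fin k ⊕ Fin k)) (hS : S.ncard ≤ 2) :
    ((mobiusLadder k).induce (Sᶜ : Set (Fin k ⊕ Fin k))).Connected := by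
  have hcompl : Sᶜ.Nonempty := by
    rw [Set.nonempty_compl]
    intro h
    rw [h, Set.ncard_univ, Nat.card_eq_fintype_card, Fintype.card_sum, Fintype.card_fin] at hS
    omega
  rw [SimpleGraph.connected_iff]
  refine ⟨?_, hcompl.to_subtype⟩
  intro u v
  by_contra hreach
  set G := (mobiusLadder k).induce (Sᶜ : Set (Fin k ⊕ Fin k)) with hG
  set X : Set (Fin k ⊕ Fin k) := {w | ∃ h : w ∈ Sᶜ, G.Reachable u ⟨w, h⟩} with hX
  set Y : Set (Fin k ⊕ Fin k) := Sᶜ \ X with hY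
  have hXsub : X ⊆ Sᶜ := fun w hw => hw.1
  have hunion : X ∪ Y = Sᶜ := Set.union_diff_cancel hXsub
  have huX : (u : Fin k ⊕ Fin k) ∈ X := ⟨u.2, by rw [Subtype.coe_eta]⟩
  have hvY : (v : Fin k ⊕ Fin k) ∈ Y := by
    refine ⟨v.2, fun hvX => ?_⟩
    obtain ⟨h1, h2⟩ := hvX
    exact hreach (by rwa [Subtype.coe_eta] at h2)
  apply core_V k hk X Y
  · rintro z hz1 ⟨_, hz2⟩; exact hz2 hz1
  · exact ⟨u, huX⟩
  · exact ⟨v, hvY⟩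
  · rintro x hx y hy hadj
    obtain ⟨hxS, hxr⟩ := hx
    have hyS : y ∈ Sᶜ := hy.1
    have : G.Adj ⟨x, hxS⟩ ⟨y, hyS⟩ := by
      simp only [hG, SimpleGraph.comap_adj, Function.Embedding.coe_subtype]
      exact hadj
    exact hy.2 ⟨hyS, hxr.trans this.reachable⟩
  · rw [hunion, compl_compl]; omega
  · left; rw [hunion, compl_compl]; exact hS

/-- For every `k ≥ 4`, the `k`-rung Möbius ladder `M_k` is
almost 4-connected. -/
theorem stmt_5 (k : ℕ) (hk : 4 ≤ k) : AlmostFourConnected (mobiusLadder k) := by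
  refine ⟨⟨?_, fun S hS => conn_del k hk S hS⟩, ?_⟩
  · rw [Fintype.card_sum, Fintype.card_fin]
    omega
  · intro A B hsep hord
    by_contra h
    push_neg at h
    obtain ⟨h1, h2⟩ := h
    have hcompl : ((A \ B) ∪ (B \ A))ᶜ = A ∩ B := by
      have huniv := hsep.1
      ext z
      simp only [Set.mem_compl_iff, Set.mem_union, Set.mem_diff, Set.mem_inter_iff]
      have : z ∈ A ∪ B := huniv ▸ Set.mem_univ z
      simp only [Set.mem_union] at this
      tauto
    apply core_V k hk (A \ B) (B \ A)
    · rintro z ⟨hz1, hz2⟩ ⟨hz3, hz4⟩; exact hz2 hz3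
    · exact Set.nonempty_of_ncard_ne_zero (by omega)
    · exact Set.nonempty_of_ncard_ne_zero (by omega)
    · exact hsep.2
    · rw [hcompl]; omega
    · right; omega
end

section
/- For every integer k ≥ 1, the graph obtained from a cycle of length 2k+1 by adding an edge joining every pair of vertices at distance exactly k is a minor of the (2k+1)-rung Möbius ladder M_{2k+1}. -/
/-- `G` is a minor of `H`: `G` can be obtained from a subgraph of `H` by contracting
edges. Equivalently (for finite graphs, as formalized here), there is a family of
pairwise disjoint nonempty connected "branch sets" in `H`, one for each vertex of `G`,
such that adjacent vertices of `G` have branch sets joined by an edge of `H`. -/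
def IsMinor {α β : Type*} (G : SimpleGraph α) (H : SimpleGraph β) : Prop :=
  ∃ φ : α → Set β,
    (∀ a, (φ a).Nonempty) ∧
    (∀ a, (H.induce (φ a)).Connected) ∧
    (Pairwise (Function.onFun Disjoint φ)) ∧
    (∀ a b, G.Adj a b → ∃ x ∈ φ a, ∃ y ∈ φ b, H.Adj x y)

/-- The graph obtained from a cycle of length `2k+1` by adding an edge joining every
pair of vertices at distance exactly `k` (on the cycle). On a cycle of odd length
`2k+1`, the pairs at distance exactly `k` are exactly the pairs `{i, i+k mod (2k+1)}`. -/
def oddCycleWithLongChords (k : ℕ) : SimpleGraph (Fin (2 * k + 1)) :=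
  SimpleGraph.fromRel (fun i j =>
    (j : ℕ) = ((i : ℕ) + 1) % (2 * k + 1) ∨ (j : ℕ) = ((i : ℕ) + k) % (2 * k + 1))

/-- position `m` (mod `2*(2k+1)`) on the big cycle of the Möbius ladder -/
def mpos (k m : ℕ) : Fin (2*k+1) ⊕ Fin (2*k+1) :=
  if h : m % (2*(2*k+1)) < 2*k+1 then Sum.inl ⟨m % (2*(2*k+1)), h⟩
  else Sum.inr ⟨m % (2*(2*k+1)) - (2*k+1), by
    have := Nat.mod_lt m (show 0 < 2*(2*k+1) by omega); omega⟩

lemma mpos_congr (k : ℕ) {a b : ℕ} (h : a % (2*(2*k+1)) = b % (2*(2*k+1))) :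
    mpos k a = mpos k b := by
  simp only [mpos, h]

lemma mpos_inj (k : ℕ) {a b : ℕ} (ha : a < 2*(2*k+1)) (hb : b < 2*(2*k+1))
    (h : mpos k a = mpos k b) : a = b := by
  simp only [mpos, Nat.mod_eq_of_lt ha, Nat.mod_eq_of_lt hb] at h
  split_ifs at h with h1 h2 h2 <;> simp_all <;> omega

lemma mod_add_one (n m : ℕ) (hn : 1 < n) :
    (m + 1) % n = if m % n = n - 1 then 0 else m % n + 1 := by
  have h1 : (m + 1) % n = (m % n + 1) % n := by
    conv_lhs => rw [Nat.add_mod, Nat.mod_eq_of_lt hn]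
  have hm : m % n < n := Nat.mod_lt _ (by omega)
  split_ifs with h
  · rw [h1, h, Nat.sub_add_cancel (by omega), Nat.mod_self]
  · rw [h1, Nat.mod_eq_of_lt (by omega)]

lemma adj_step (k m : ℕ) : (mobiusLadder (2*k+1)).Adj (mpos k m) (mpos k (m+1)) := by
  have hmod := mod_add_one (2*(2*k+1)) m (by omega)
  have hm : m % (2*(2*k+1)) < 2*(2*k+1) := Nat.mod_lt _ (by omega)
  rcases Nat.lt_or_ge (m % (2*(2*k+1))) (2*k+1) with h | h
  · rw [if_neg (by omega)] at hmod
    simp only [mpos, hmod]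
    rcases Nat.lt_or_ge (m % (2*(2*k+1))) (2*k) with h' | h'
    · rw [dif_pos h, dif_pos (by omega)]
      simp [mobiusLadder, SimpleGraph.fromRel_adj]
    · have : m % (2*(2*k+1)) = 2*k := by omega
      rw [dif_pos h, dif_neg (by omega)]
      simp [mobiusLadder, SimpleGraph.fromRel_adj]
      omega
  · rcases Nat.lt_or_ge (m % (2*(2*k+1))) (2*(2*k+1) - 1) with h' | h'
    · rw [if_neg (by omega)] at hmod
      simp only [mpos, hmod]
      rw [dif_neg (by omega), dif_neg (by omega)]
      simp [mobiusLadder, SimpleGraph.fromRel_adj]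
      omega
    · rw [if_pos (by omega)] at hmod
      simp only [mpos, hmod]
      rw [dif_neg (by omega), dif_pos (by omega)]
      simp [mobiusLadder, SimpleGraph.fromRel_adj]
      omega

lemma adj_rung (k m : ℕ) : (mobiusLadder (2*k+1)).Adj (mpos k m) (mpos k (m + (2*k+1))) := by
  have h1 : (m + (2*k+1)) % (2*(2*k+1)) = (m % (2*(2*k+1)) + (2*k+1)) % (2*(2*k+1)) := by
    conv_lhs => rw [Nat.add_mod, Nat.mod_eq_of_lt (show 2*k+1 < 2*(2*k+1) by omega)]
  have hm : m % (2*(2*k+1)) < 2*(2*k+1) := Nat.mod_lt _ (by omega)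
  rcases Nat.lt_or_ge (m % (2*(2*k+1))) (2*k+1) with h | h
  · have h2 : (m + (2*k+1)) % (2*(2*k+1)) = m % (2*(2*k+1)) + (2*k+1) := by
      rw [h1, Nat.mod_eq_of_lt (by omega)]
    simp only [mpos, h2]
    rw [dif_pos h, dif_neg (by omega)]
    simp [mobiusLadder, SimpleGraph.fromRel_adj]
  · have h2 : (m + (2*k+1)) % (2*(2*k+1)) = m % (2*(2*k+1)) - (2*k+1) := by
      rw [h1, show m % (2*(2*k+1)) + (2*k+1) = (m % (2*(2*k+1)) - (2*k+1)) + 1*(2*(2*k+1)) by omega,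
        Nat.add_mul_mod_self_right, Nat.mod_eq_of_lt (by omega)]
    simp only [mpos, h2]
    rw [dif_neg (by omega), dif_pos (by omega)]
    simp [mobiusLadder, SimpleGraph.fromRel_adj]

lemma pair_connected {β : Type*} (H : SimpleGraph β) {x y : β} (h : H.Adj x y) :
    (H.induce {x, y}).Connected := by
  rw [SimpleGraph.connected_iff]
  refine ⟨?_, ⟨⟨x, by simp⟩⟩⟩
  intro a b
  have hmem : ∀ c : ({x, y} : Set β), c = ⟨x, by simp⟩ ∨ c = ⟨y, by simp⟩ := by
    rintro ⟨c, hc⟩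
    rcases hc with rfl | hc
    · exact Or.inl rfl
    · exact Or.inr (Subtype.ext hc)
  have hadj : (H.induce {x, y}).Adj ⟨x, by simp⟩ ⟨y, by simp⟩ := by
    simpa using h
  rcases hmem a with rfl | rfl <;> rcases hmem b with rfl | rfl
  · exact SimpleGraph.Reachable.refl _
  · exact hadj.reachable
  · exact hadj.symm.reachable
  · exact SimpleGraph.Reachable.refl _
/-- the branch set of vertex `i`: positions `2i, 2i+1` on the big cycle -/
def branch (k : ℕ) (i : Fin (2*k+1)) : Set (Fin (2*k+1) ⊕ Fin (2*k+1)) :=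
  {mpos k (2*(i:ℕ)), mpos k (2*(i:ℕ)+1)}

lemma chord_edge (k : ℕ) (i j : Fin (2*k+1))
    (h : (j : ℕ) = ((i : ℕ) + 1) % (2*k+1) ∨ (j : ℕ) = ((i : ℕ) + k) % (2*k+1)) :
    ∃ x ∈ branch k i, ∃ y ∈ branch k j, (mobiusLadder (2*k+1)).Adj x y := by
  rcases h with h | h
  · -- consecutive: edge pos(2i+1) ~ pos(2i+1+1), and pos(2i+2) = pos(2j)
    refine ⟨mpos k (2*(i:ℕ)+1), Or.inr rfl, mpos k (2*(i:ℕ)+1+1), Or.inl ?_,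
      adj_step k (2*(i:ℕ)+1)⟩
    apply mpos_congr
    have h1 : (2*(i:ℕ)+1+1) % (2*(2*k+1)) = 2*(((i:ℕ)+1) % (2*k+1)) := by
      rw [show 2*(i:ℕ)+1+1 = 2*((i:ℕ)+1) by ring, Nat.mul_mod_mul_left]
    have hn : (((i:ℕ)+1) % (2*k+1)) < 2*k+1 := Nat.mod_lt _ (by omega)
    rw [h1, h]
    exact (Nat.mod_eq_of_lt (by omega)).symm
  · -- chord: rung edge pos(2i) ~ pos(2i+(2k+1)) = pos(2j+1)
    refine ⟨mpos k (2*(i:ℕ)), Or.inl rfl, mpos k (2*(i:ℕ)+(2*k+1)), Or.inr ?_,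
      adj_rung k (2*(i:ℕ))⟩
    apply mpos_congr
    have hn : (((i:ℕ)+k) % (2*k+1)) < 2*k+1 := Nat.mod_lt _ (by omega)
    have h1 : (2*(i:ℕ)+2*k) % (2*(2*k+1)) = 2*(((i:ℕ)+k) % (2*k+1)) := by
      rw [show 2*(i:ℕ)+2*k = 2*((i:ℕ)+k) by ring, Nat.mul_mod_mul_left]
    have h2 : (2*(i:ℕ)+(2*k+1)) % (2*(2*k+1)) = 2*(((i:ℕ)+k) % (2*k+1)) + 1 := by
      rw [show 2*(i:ℕ)+(2*k+1) = (2*(i:ℕ)+2*k)+1 by ring,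
        mod_add_one _ _ (by omega), h1, if_neg (by omega)]
    rw [h2, h]
    exact (Nat.mod_eq_of_lt (by omega)).symm


/-- for every `k ≥ 1`, the graph obtained from a cycle of length `2k+1`
by joining every pair of vertices at distance exactly `k` is a minor of the
`(2k+1)`-rung Möbius ladder. -/
theorem stmt_8 (k : ℕ) (hk : 1 ≤ k) :
    IsMinor (oddCycleWithLongChords k) (mobiusLadder (2 * k + 1)) := by
  refine ⟨branch k, fun a => ⟨mpos k (2*(a:ℕ)), Or.inl rfl⟩, fun a => ?_, ?_, ?_⟩
  · exact pair_connected _ (adj_step k (2*(a:ℕ)))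
  · intro i j hij
    rw [Function.onFun, Set.disjoint_left]
    have hi : (i:ℕ) < 2*k+1 := i.isLt
    have hj : (j:ℕ) < 2*k+1 := j.isLt
    have hne : (i:ℕ) ≠ (j:ℕ) := fun h => hij (Fin.ext h)
    rintro x (rfl | rfl) (h | h) <;>
      [skip; skip; skip; skip] <;>
      exact hne (by have := mpos_inj k (by omega) (by omega) h; omega)
  · intro a b hab
    rw [oddCycleWithLongChords, SimpleGraph.fromRel_adj] at hab
    rcases hab.2 with h | h
    · exact chord_edge k a b h
    · obtain ⟨x, hx, y, hy, hxy⟩ := chord_edge k b a h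
      exact ⟨y, hy, x, hx, hxy.symm⟩
end
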